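/- Fix integers t₀ ≤ t₁ and define the sequence L_t recursively by L_{t₁} = e^{-1}(t₁ - t₀ + 1)^{-1} and L_t = L_{t+1} + L_{t+1}² for t₀ ≤ t < t₁. Then L_t ≤ (t₁ - t₀ + 1)^{-1} for all t ∈ [t₀, t₁]. -/
import Mathlib


/-- The backwards recursion L_{t₁} = e⁻¹(t₁-t₀+1)⁻¹, L_t = L_{t+1} + L_{t+1}²
satisfies L_t ≤ (t₁-t₀+1)⁻¹ on [t₀,t₁]. -/
theorem backwards_recursion_bound
    (t₀ t₁ : ℤ) (h : t₀ ≤ t₁) (L : ℤ → ℝ)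
    (hend : L t₁ = (Real.exp 1)⁻¹ * ((t₁ - t₀ + 1 : ℤ) : ℝ)⁻¹)
    (hrec : ∀ t : ℤ, t₀ ≤ t → t < t₁ → L t = L (t + 1) + L (t + 1) ^ 2) :
    ∀ t : ℤ, t₀ ≤ t → t ≤ t₁ → L t ≤ ((t₁ - t₀ + 1 : ℤ) : ℝ)⁻¹ := by
  intro t ht0 ht1
  set n : ℝ := ((t₁ - t₀ + 1 : ℤ) : ℝ) with hn_def
  have hn1 : (1:ℝ) ≤ n := by
    have : (1:ℤ) ≤ t₁ - t₀ + 1 := by omega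
    rw [hn_def]; exact_mod_cast this
  have hn0 : (0:ℝ) < n := lt_of_lt_of_le one_pos hn1
  have hpow : ∀ k : ℕ, (k:ℝ) ≤ n → (1 + 1/n)^k ≤ Real.exp 1 := by
    intro k hk
    calc (1+1/n)^k ≤ (Real.exp (1/n))^k := by
          apply pow_le_pow_left₀ (by positivity)
          linarith [Real.add_one_le_exp (1/n)]
      _ = Real.exp (k * (1/n)) := (Real.exp_nat_mul _ k).symm
      _ ≤ Real.exp 1 := by
          apply Real.exp_le_exp.mpr
          rw [mul_one_div]
          exact (div_le_one hn0).mpr hk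
  have hC : (Real.exp 1)⁻¹ * n⁻¹ * Real.exp 1 = n⁻¹ := by
    have he := Real.exp_ne_zero 1
    field_simp
  have key : ∀ k : ℕ, t₀ ≤ t₁ - k →
      0 ≤ L (t₁ - k) ∧ L (t₁ - k) ≤ (Real.exp 1)⁻¹ * n⁻¹ * (1 + 1/n)^k := by
    intro k
    induction k with
    | zero =>
      intro _
      simp only [Nat.cast_zero, sub_zero, pow_zero, mul_one]
      refine ⟨?_, le_of_eq hend⟩
      rw [hend]
      positivity
    | succ k ih =>
      intro hk
      have hk' : t₀ ≤ t₁ - k := by omega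
      obtain ⟨ih0, ihb⟩ := ih hk'
      have hklen : ((k:ℕ):ℝ) ≤ n := by
        have h1 : ((k:ℕ):ℤ) ≤ t₁ - t₀ + 1 := by omega
        rw [hn_def]; exact_mod_cast h1
      have hLsmall : L (t₁ - k) ≤ n⁻¹ := by
        calc L (t₁ - k) ≤ (Real.exp 1)⁻¹ * n⁻¹ * (1+1/n)^k := ihb
          _ ≤ (Real.exp 1)⁻¹ * n⁻¹ * Real.exp 1 :=
              mul_le_mul_of_nonneg_left (hpow k hklen) (by positivity)
          _ = n⁻¹ := hC
      have ht : t₀ ≤ t₁ - ((k:ℤ)+1) := by push_cast at hk ⊢; omega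
      have ht' : t₁ - ((k:ℤ)+1) < t₁ := by omega
      have heq : t₁ - ((k:ℤ)+1) + 1 = t₁ - k := by ring
      have hr := hrec _ ht ht'
      rw [heq] at hr
      have hstep : L (t₁ - ((k:ℤ)+1)) ≤ (Real.exp 1)⁻¹ * n⁻¹ * (1+1/n)^(k+1) := by
        rw [hr]
        have h1 : L (t₁ - k) + L (t₁ - k)^2 = L (t₁ - k) * (1 + L (t₁ - k)) := by ring
        rw [h1, pow_succ, ← mul_assoc]
        apply mul_le_mul ihb _ (by linarith) (by positivity)
        have : n⁻¹ = 1/n := (one_div n).symm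
        linarith [hLsmall, this]
      constructor
      · push_cast
        rw [show t₁ - ((k:ℤ)+1) = t₁ - ((k:ℤ)+1) from rfl] at hr
        push_cast [hr]
        nlinarith
      · push_cast at hstep ⊢
        exact hstep
  have hk1 : t₀ ≤ t₁ - ((t₁ - t).toNat : ℤ) := by omega
  obtain ⟨_, hb⟩ := key (t₁ - t).toNat hk1
  have hteq : t₁ - ((t₁ - t).toNat : ℤ) = t := by omega
  rw [hteq] at hb
  have hklen : (((t₁ - t).toNat : ℕ):ℝ) ≤ n := by
    have h1 : (((t₁ - t).toNat : ℕ):ℤ) ≤ t₁ - t₀ + 1 := by omega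
    rw [hn_def]; exact_mod_cast h1
  calc L t ≤ (Real.exp 1)⁻¹ * n⁻¹ * (1+1/n)^(t₁ - t).toNat := hb
    _ ≤ (Real.exp 1)⁻¹ * n⁻¹ * Real.exp 1 :=
        mul_le_mul_of_nonneg_left (hpow _ hklen) (by positivity)
    _ = n⁻¹ := hC
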